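/- Let u and v be axis-aligned rectangles with disjoint interiors whose intersection S = u ∩ v is a segment of positive length (u and v are adjacent rectangles with common segment S). Let p be a point in the interior of u and q a point in the interior of v, and suppose the open segment from p to q contains a point z in the relative interior of S. Then the closed segment from p to q is contained in u ∪ v, it meets the union of the boundaries of u and v exactly in the single point z, the open segment from p to z lies in the interior of u, and the open segment from z to q lies in the interior of v. -/

import Mathlib

open Set

/-- An axis-aligned rectangle: a product `[x₁,x₂] × [y₁,y₂]` with `x₁ < x₂` and `y₁ < y₂`. -/
def IsRect (s : Set (ℝ × ℝ)) : Prop :=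
  ∃ x₁ x₂ y₁ y₂ : ℝ, x₁ < x₂ ∧ y₁ < y₂ ∧ s = Icc x₁ x₂ ×ˢ Icc y₁ y₂

/-- Segment decomposition: if `z` lies on the open segment from `p` to `q`, the
closed segment splits as the union of the two subsegments. -/
lemma segment_split {p q z w : ℝ × ℝ} (hz : z ∈ openSegment ℝ p q)
    (hw : w ∈ segment ℝ p q) : w ∈ segment ℝ p z ∪ segment ℝ z q := by
  obtain ⟨a, b, ha, hb, hab, hzeq⟩ := hz
  obtain ⟨c, d, hc, hd, hcd, hweq⟩ := hw
  rcases le_or_gt d b with hdb | hbd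
  · left
    refine ⟨(b - d)/b, d/b, div_nonneg (by linarith) hb.le, div_nonneg hd hb.le,
      by field_simp; ring, ?_⟩
    subst hzeq hweq
    have hb' : b ≠ 0 := ne_of_gt hb
    match_scalars
    · field_simp
      linear_combination d*hab - b*hcd
    · field_simp
  · right
    have hca : c < a := by nlinarith
    refine ⟨c/a, (a - c)/a, div_nonneg hc ha.le, div_nonneg (by linarith) ha.le,
      by field_simp; ring, ?_⟩
    subst hzeq hweq
    have ha' : a ≠ 0 := ne_of_gt ha
    match_scalars
    · field_simp
    · field_simp
      linear_combination c*hab - a*hcd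

lemma key (u v : Set (ℝ × ℝ)) (hcu : Convex ℝ u) (hcv : Convex ℝ v)
    (hUc : IsClosed u) (hVc : IsClosed v)
    (L : (ℝ × ℝ) →ₗ[ℝ] ℝ) (t : ℝ)
    (hut : ∀ w ∈ u, L w ≤ t) (hvt : ∀ w ∈ v, t ≤ L w)
    (hiu : ∀ w ∈ interior u, L w < t) (hiv : ∀ w ∈ interior v, t < L w)
    (p q z : ℝ × ℝ) (hp : p ∈ interior u) (hq : q ∈ interior v)
    (hz : z ∈ openSegment ℝ p q) (hzu : z ∈ u) (hzv : z ∈ v) :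
    segment ℝ p q ⊆ u ∪ v ∧
    segment ℝ p q ∩ (frontier u ∪ frontier v) = {z} ∧
    openSegment ℝ p z ⊆ interior u ∧
    openSegment ℝ z q ⊆ interior v := by
  have hLz : L z = t := le_antisymm (hut z hzu) (hvt z hzv)
  have hLp : L p < t := hiu p hp
  have hLq : t < L q := hiv q hq
  have h3 : openSegment ℝ p z ⊆ interior u :=
    hcu.openSegment_interior_closure_subset_interior hp (subset_closure hzu)
  have h4 : openSegment ℝ z q ⊆ interior v := by
    rw [openSegment_symm]
    exact hcv.openSegment_interior_closure_subset_interior hq (subset_closure hzv)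
  have hpz : segment ℝ p z ⊆ u := hcu.segment_subset (interior_subset hp) hzu
  have hzq : segment ℝ z q ⊆ v := hcv.segment_subset hzv (interior_subset hq)
  -- strict inequalities on open subsegments
  have hlt : ∀ w ∈ openSegment ℝ p z, L w < t := by
    rintro w ⟨a, b, ha, hb, hab, rfl⟩
    simp only [map_add, map_smul, smul_eq_mul, hLz]
    have h1 : a * L p < a * t := mul_lt_mul_of_pos_left hLp ha
    have h2 : a * t + b * t = t := by rw [← add_mul, hab, one_mul]
    linarith
  have hgt : ∀ w ∈ openSegment ℝ z q, t < L w := by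
    rintro w ⟨a, b, ha, hb, hab, rfl⟩
    simp only [map_add, map_smul, smul_eq_mul, hLz]
    have h1 : b * t < b * L q := mul_lt_mul_of_pos_left hLq hb
    have h2 : a * t + b * t = t := by rw [← add_mul, hab, one_mul]
    linarith
  have hpv : p ∉ v := fun h => absurd (hvt p h) (not_le.2 hLp)
  have hqu : q ∉ u := fun h => absurd (hut q h) (not_le.2 hLq)
  refine ⟨?_, ?_, h3, h4⟩
  · intro w hw
    rcases segment_split hz hw with h | h
    · exact Or.inl (hpz h)
    · exact Or.inr (hzq h)
  · apply Subset.antisymm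
    · rintro w ⟨hwseg, hwf⟩
      rcases segment_split hz hwseg with h | h
      · rw [← insert_endpoints_openSegment] at h
        rcases h with rfl | rfl | h
        · exfalso
          rcases hwf with hf | hf
          · exact hf.2 hp
          · exact hpv (hVc.frontier_subset hf)
        · rfl
        · exfalso
          rcases hwf with hf | hf
          · exact hf.2 (h3 h)
          · exact absurd (hvt w (hVc.frontier_subset hf)) (not_le.2 (hlt w h))
      · rw [← insert_endpoints_openSegment] at h
        rcases h with rfl | rfl | h
        · rfl
        · exfalso
          rcases hwf with hf | hf
          · exact hqu (hUc.frontier_subset hf)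
          · exact hf.2 hq
        · exfalso
          rcases hwf with hf | hf
          · exact absurd (hut w (hUc.frontier_subset hf)) (not_le.2 (hgt w h))
          · exact hf.2 (h4 h)
    · rintro w rfl
      refine ⟨openSegment_subset_segment _ _ _ hz, Or.inl ⟨subset_closure hzu, fun h => ?_⟩⟩
      exact absurd (hiu w h) (by simp [hLz])

/-- let `u` and `v` be adjacent axis-aligned rectangles (disjoint
interiors, common segment `u ∩ v` of positive length), `p ∈ interior u`,
`q ∈ interior v`, and suppose the open segment from `p` to `q` contains a point `z`
in the relative interior of `u ∩ v`. Then the closed segment from `p` to `q` lies in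
`u ∪ v`, meets the union of the two boundaries exactly in `z`, and the open
subsegments from `p` to `z` and from `z` to `q` lie in the interiors of `u` and `v`,
respectively. -/
theorem segment_between_adjacent_rectangles
    (u v : Set (ℝ × ℝ)) (hu : IsRect u) (hv : IsRect v)
    (hdisj : interior u ∩ interior v = ∅)
    (hseg : ∃ e f : ℝ × ℝ, e ≠ f ∧ u ∩ v = segment ℝ e f)
    (p q z : ℝ × ℝ) (hp : p ∈ interior u) (hq : q ∈ interior v)
    (hz : z ∈ openSegment ℝ p q) (hzS : z ∈ intrinsicInterior ℝ (u ∩ v)) :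
    segment ℝ p q ⊆ u ∪ v ∧
    segment ℝ p q ∩ (frontier u ∪ frontier v) = {z} ∧
    openSegment ℝ p z ⊆ interior u ∧
    openSegment ℝ z q ⊆ interior v := by
  obtain ⟨a₁, a₂, b₁, b₂, ha, hb, rfl⟩ := hu
  obtain ⟨c₁, c₂, d₁, d₂, hc, hd, rfl⟩ := hv
  have hzuv : z ∈ Icc a₁ a₂ ×ˢ Icc b₁ b₂ ∩ Icc c₁ c₂ ×ˢ Icc d₁ d₂ :=
    intrinsicInterior_subset hzS
  have hIU : interior (Icc a₁ a₂ ×ˢ Icc b₁ b₂) = Ioo a₁ a₂ ×ˢ Ioo b₁ b₂ := by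
    rw [interior_prod_eq, interior_Icc, interior_Icc]
  have hIV : interior (Icc c₁ c₂ ×ˢ Icc d₁ d₂) = Ioo c₁ c₂ ×ˢ Ioo d₁ d₂ := by
    rw [interior_prod_eq, interior_Icc, interior_Icc]
  have hcu : Convex ℝ (Icc a₁ a₂ ×ˢ Icc b₁ b₂) := (convex_Icc _ _).prod (convex_Icc _ _)
  have hcv : Convex ℝ (Icc c₁ c₂ ×ˢ Icc d₁ d₂) := (convex_Icc _ _).prod (convex_Icc _ _)
  have hUc : IsClosed (Icc a₁ a₂ ×ˢ Icc b₁ b₂) := isClosed_Icc.prod isClosed_Icc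
  have hVc : IsClosed (Icc c₁ c₂ ×ˢ Icc d₁ d₂) := isClosed_Icc.prod isClosed_Icc
  rcases le_or_gt a₂ c₁ with h | h1
  · refine key _ _ hcu hcv hUc hVc (LinearMap.fst ℝ ℝ ℝ) a₂ ?_ ?_ ?_ ?_ p q z hp hq hz
      hzuv.1 hzuv.2
    · intro w hw; exact hw.1.2
    · intro w hw; exact le_trans h hw.1.1
    · intro w hw; rw [hIU] at hw; exact hw.1.2
    · intro w hw; rw [hIV] at hw; exact lt_of_le_of_lt h hw.1.1
  rcases le_or_gt c₂ a₁ with h | h2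
  · refine key _ _ hcu hcv hUc hVc (-(LinearMap.fst ℝ ℝ ℝ)) (-a₁) ?_ ?_ ?_ ?_ p q z hp hq hz
      hzuv.1 hzuv.2
    · intro w hw; simp only [LinearMap.neg_apply, LinearMap.fst_apply]; linarith [hw.1.1]
    · intro w hw; simp only [LinearMap.neg_apply, LinearMap.fst_apply]; linarith [hw.1.2]
    · intro w hw; rw [hIU] at hw
      simp only [LinearMap.neg_apply, LinearMap.fst_apply]; linarith [hw.1.1]
    · intro w hw; rw [hIV] at hw
      simp only [LinearMap.neg_apply, LinearMap.fst_apply]; linarith [hw.1.2]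
  rcases le_or_gt b₂ d₁ with h | h3
  · refine key _ _ hcu hcv hUc hVc (LinearMap.snd ℝ ℝ ℝ) b₂ ?_ ?_ ?_ ?_ p q z hp hq hz
      hzuv.1 hzuv.2
    · intro w hw; exact hw.2.2
    · intro w hw; exact le_trans h hw.2.1
    · intro w hw; rw [hIU] at hw; exact hw.2.2
    · intro w hw; rw [hIV] at hw; exact lt_of_le_of_lt h hw.2.1
  rcases le_or_gt d₂ b₁ with h | h4
  · refine key _ _ hcu hcv hUc hVc (-(LinearMap.snd ℝ ℝ ℝ)) (-b₁) ?_ ?_ ?_ ?_ p q z hp hq hz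
      hzuv.1 hzuv.2
    · intro w hw; simp only [LinearMap.neg_apply, LinearMap.snd_apply]; linarith [hw.2.1]
    · intro w hw; simp only [LinearMap.neg_apply, LinearMap.snd_apply]; linarith [hw.2.2]
    · intro w hw; rw [hIU] at hw
      simp only [LinearMap.neg_apply, LinearMap.snd_apply]; linarith [hw.2.1]
    · intro w hw; rw [hIV] at hw
      simp only [LinearMap.neg_apply, LinearMap.snd_apply]; linarith [hw.2.2]
  · exfalso
    have hx1 := le_max_left a₁ c₁
    have hx2 := le_max_right a₁ c₁
    have hx3 := min_le_left a₂ c₂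
    have hx4 := min_le_right a₂ c₂
    have hy1 := le_max_left b₁ d₁
    have hy2 := le_max_right b₁ d₁
    have hy3 := min_le_left b₂ d₂
    have hy4 := min_le_right b₂ d₂
    have hxm : max a₁ c₁ < min a₂ c₂ := lt_min (max_lt ha h1) (max_lt h2 hc)
    have hym : max b₁ d₁ < min b₂ d₂ := lt_min (max_lt hb h3) (max_lt h4 hd)
    have hx : (max a₁ c₁ + min a₂ c₂)/2 ∈ Ioo a₁ a₂ :=
      ⟨by linarith, by linarith⟩
    have hx' : (max a₁ c₁ + min a₂ c₂)/2 ∈ Ioo c₁ c₂ :=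
      ⟨by linarith, by linarith⟩
    have hy : (max b₁ d₁ + min b₂ d₂)/2 ∈ Ioo b₁ b₂ :=
      ⟨by linarith, by linarith⟩
    have hy' : (max b₁ d₁ + min b₂ d₂)/2 ∈ Ioo d₁ d₂ :=
      ⟨by linarith, by linarith⟩
    have hw : ((max a₁ c₁ + min a₂ c₂)/2, (max b₁ d₁ + min b₂ d₂)/2) ∈
        interior (Icc a₁ a₂ ×ˢ Icc b₁ b₂) ∩ interior (Icc c₁ c₂ ×ˢ Icc d₁ d₂) := by
      rw [hIU, hIV]
      exact ⟨⟨hx, hy⟩, ⟨hx', hy'⟩⟩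
    rw [hdisj] at hw
    exact hw
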